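/- arXiv:1912.11864 — 4 statements merged into one kernel-verified Lean document; each statement's English description precedes it below -/
import Mathlib

section
/- Let k ≥ 1 and let φ be a Boolean function on V = {0,...,k} all of whose satisfying valuations have even size. Then there exists a Boolean function φ̌ on V in canonical form such that φ̌ ≃ φ. -/
open scoped Classical

/-- Flip the membership of variable `l` in valuation `ν`. -/
def flipV {k : ℕ} (ν : Finset (Fin (k + 1))) (l : Fin (k + 1)) : Finset (Fin (k + 1)) :=
  if l ∈ ν then ν.erase l else insert l ν

/-- `φ →+ φ'`: there are `ν, l` with `ν ∉ sat(φ)`, `ν^(l) ∉ sat(φ)` and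
`sat(φ') = sat(φ) ∪ {ν, ν^(l)}`. -/
def StepPlus (k : ℕ) (φ φ' : Finset (Fin (k + 1)) → Bool) : Prop :=
  ∃ (ν : Finset (Fin (k + 1))) (l : Fin (k + 1)),
    φ ν = false ∧ φ (flipV ν l) = false ∧
    ∀ μ, (φ' μ = true ↔ φ μ = true ∨ μ = ν ∨ μ = flipV ν l)

/-- `φ →− φ'`: remove two adjacent satisfying valuations. -/
def StepMinus (k : ℕ) (φ φ' : Finset (Fin (k + 1)) → Bool) : Prop :=
  StepPlus k φ' φ

/-- `φ →± φ'`. -/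
def StepPM (k : ℕ) (φ φ' : Finset (Fin (k + 1)) → Bool) : Prop :=
  StepPlus k φ φ' ∨ StepMinus k φ φ'

/-- The relation `≃` (equivalently `→±*`): the reflexive transitive closure of `→±`. -/
def EquivPM (k : ℕ) (φ φ' : Finset (Fin (k + 1)) → Bool) : Prop :=
  Relation.ReflTransGen (StepPM k) φ φ'

/-- A Boolean function is in canonical form if every satisfying valuation has even size and
there is no bad pair: no even-size valuations `ν, ν'` with `|ν'| < |ν|`, `ν ∈ sat(φ)` and
`ν' ∉ sat(φ)`. -/
def CanonicalForm (k : ℕ) (φ : Finset (Fin (k + 1)) → Bool) : Prop :=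
  (∀ ν, φ ν = true → Even ν.card) ∧
  ¬ ∃ ν ν' : Finset (Fin (k + 1)), Even ν.card ∧ Even ν'.card ∧
      ν'.card < ν.card ∧ φ ν = true ∧ φ ν' = false

namespace Stmt13Aux

variable {k : ℕ}

lemma mem_flipV {ν : Finset (Fin (k + 1))} {l x : Fin (k + 1)} :
    x ∈ flipV ν l ↔ (x ∈ ν ↔ x ≠ l) := by
  unfold flipV
  by_cases hl : l ∈ ν <;> by_cases hx : x = l <;>
    simp [hl, hx, Finset.mem_erase, Finset.mem_insert]

lemma flipV_ne {ν : Finset (Fin (k + 1))} {l : Fin (k + 1)} : flipV ν l ≠ ν := by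
  intro h
  have h1 : l ∈ flipV ν l ↔ (l ∈ ν ↔ l ≠ l) := mem_flipV
  rw [h] at h1
  tauto

lemma even_flipV {ν : Finset (Fin (k + 1))} {l : Fin (k + 1)} :
    Even (flipV ν l).card ↔ ¬ Even ν.card := by
  unfold flipV
  by_cases hl : l ∈ ν
  · have h1 : (ν.erase l).card + 1 = ν.card := Finset.card_erase_add_one hl
    rw [if_pos hl, ← h1]
    simp [Nat.even_add_one]
  · rw [if_neg hl, Finset.card_insert_of_notMem hl]
    simp [Nat.even_add_one]

lemma even_flipV_flipV {ν : Finset (Fin (k + 1))} {l l' : Fin (k + 1)} :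
    Even ((flipV (flipV ν l) l').card) ↔ Even ν.card := by
  rw [even_flipV, even_flipV]; tauto

lemma flipV_flipV_ne {ν : Finset (Fin (k + 1))} {l l' : Fin (k + 1)} (h : l' ≠ l) :
    flipV (flipV ν l) l' ≠ ν := by
  intro heq
  have h1 : l' ∈ flipV (flipV ν l) l' ↔ (l' ∈ flipV ν l ↔ l' ≠ l') := mem_flipV
  have h2 : l' ∈ flipV ν l ↔ (l' ∈ ν ↔ l' ≠ l) := mem_flipV
  rw [heq] at h1
  simp [h] at h2
  tauto

/-- add a pair of valuations -/
def addP (φ : Finset (Fin (k + 1)) → Bool) (a b : Finset (Fin (k + 1))) :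
    Finset (Fin (k + 1)) → Bool :=
  fun μ => if μ = a ∨ μ = b then true else φ μ

/-- remove a pair of valuations -/
def remP (φ : Finset (Fin (k + 1)) → Bool) (a b : Finset (Fin (k + 1))) :
    Finset (Fin (k + 1)) → Bool :=
  fun μ => if μ = a ∨ μ = b then false else φ μ

lemma equiv_add (φ : Finset (Fin (k + 1)) → Bool) (ν : Finset (Fin (k + 1)))
    (l : Fin (k + 1)) (h1 : φ ν = false) (h2 : φ (flipV ν l) = false) :
    EquivPM k φ (addP φ ν (flipV ν l)) := by
  refine Relation.ReflTransGen.single (Or.inl ⟨ν, l, h1, h2, ?_⟩)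
  intro μ
  unfold addP
  by_cases h : μ = ν ∨ μ = flipV ν l <;> simp [h]

lemma equiv_rem (φ : Finset (Fin (k + 1)) → Bool) (ν : Finset (Fin (k + 1)))
    (l : Fin (k + 1)) (h1 : φ ν = true) (h2 : φ (flipV ν l) = true) :
    EquivPM k φ (remP φ ν (flipV ν l)) := by
  refine Relation.ReflTransGen.single (Or.inr ⟨ν, l, ?_, ?_, ?_⟩)
  · unfold remP; simp
  · unfold remP; simp
  · intro μ
    unfold remP
    by_cases h : μ = ν ∨ μ = flipV ν l
    · rcases h with h | h <;> subst h <;> simp [h1, h2]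
    · simp [h]

/-- Move lemma: replace satisfying valuation `ν` by the non-satisfying `ν''` obtained by
flipping two distinct variables. -/
lemma move (φ : Finset (Fin (k + 1)) → Bool) (hE : ∀ x, φ x = true → Even x.card)
    {ν : Finset (Fin (k + 1))} {l l' : Fin (k + 1)} (hll : l' ≠ l)
    (hν : φ ν = true) (hν'' : φ (flipV (flipV ν l) l') = false) :
    ∃ φ', EquivPM k φ φ' ∧
      ∀ x, (φ' x = true ↔ (x = flipV (flipV ν l) l' ∨ (φ x = true ∧ x ≠ ν))) := by
  set μ := flipV ν l with hμdef
  set ν'' := flipV μ l' with hν''def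
  have hνν'' : ν'' ≠ ν := flipV_flipV_ne hll
  have hμν : μ ≠ ν := flipV_ne
  have hμν'' : ν'' ≠ μ := flipV_ne
  have hμ : φ μ = false := by
    rcases Bool.eq_false_or_eq_true (φ μ) with h | h
    · exact absurd (hE μ h) (by rw [hμdef, even_flipV]; simpa using hE ν hν)
    · exact h
  refine ⟨remP (addP φ μ ν'') ν μ, ?_, ?_⟩
  · refine Relation.ReflTransGen.trans (equiv_add φ μ l' hμ hν'') ?_
    have h1 : (addP φ μ ν'') ν = true := by
      unfold addP; rw [if_neg (by tauto), hν]
    have h2 : (addP φ μ ν'') μ = true := by unfold addP; simp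
    exact equiv_rem _ ν l h1 h2
  · intro x
    unfold remP addP
    by_cases hx1 : x = ν
    · subst hx1
      simp [hνν''.symm, hν]
    · by_cases hx2 : x = μ
      · subst hx2
        simp [hμν, hμν''.symm, hμ]
      · by_cases hx3 : x = ν''
        · subst hx3; simp [hx1, hx2]
        · simp [hx1, hx2, hx3]

set_option maxHeartbeats 2000000 in
/-- Swap lemma. -/
lemma swap : ∀ d : ℕ, ∀ φ : Finset (Fin (k + 1)) → Bool, ∀ ν ν' : Finset (Fin (k + 1)),
    (symmDiff ν ν').card = d →
    (∀ x, φ x = true → Even x.card) → Even ν'.card →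
    φ ν = true → φ ν' = false → ν ≠ ν' →
    ∃ φ', EquivPM k φ φ' ∧ ∀ x, (φ' x = true ↔ (x = ν' ∨ (φ x = true ∧ x ≠ ν))) := by
  intro d
  induction d using Nat.strong_induction_on with
  | _ d IH =>
  intro φ ν ν' hd hE hν'even hν hν' hne
  have hsne : (symmDiff ν ν').Nonempty := by
    rw [Finset.nonempty_iff_ne_empty]
    intro h
    exact hne (symmDiff_eq_bot.mp h)
  obtain ⟨l, hl⟩ := hsne
  by_cases h2 : ((symmDiff ν ν').erase l).Nonempty
  · obtain ⟨l', hl'⟩ := h2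
    have hll : l' ≠ l := (Finset.mem_erase.mp hl').1
    have hl's : l' ∈ symmDiff ν ν' := (Finset.mem_erase.mp hl').2
    set ν'' := flipV (flipV ν l) l' with hν''def
    have hlmem : (l ∈ ν ∧ l ∉ ν') ∨ (l ∈ ν' ∧ l ∉ ν) := Finset.mem_symmDiff.mp hl
    have hl'mem : (l' ∈ ν ∧ l' ∉ ν') ∨ (l' ∈ ν' ∧ l' ∉ ν) := Finset.mem_symmDiff.mp hl's
    -- symmetric difference of ν'' and ν'
    have hsd : symmDiff ν'' ν' = ((symmDiff ν ν').erase l).erase l' := by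
      ext x
      have hx'' : x ∈ ν'' ↔ ((x ∈ ν ↔ x ≠ l) ↔ x ≠ l') := by
        rw [hν''def, mem_flipV, mem_flipV]
      rw [Finset.mem_symmDiff, Finset.mem_erase, Finset.mem_erase, Finset.mem_symmDiff, hx'']
      by_cases hx1 : x = l
      · subst hx1
        rcases hlmem with ⟨h1, h2⟩ | ⟨h1, h2⟩ <;> simp [h1, h2, Ne.symm hll]
      · by_cases hx2 : x = l'
        · subst hx2
          rcases hl'mem with ⟨h1, h2⟩ | ⟨h1, h2⟩ <;> simp [h1, h2, hll]
        · by_cases hxν : x ∈ ν <;> simp [hx1, hx2, hxν]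
    have hcard : (symmDiff ν'' ν').card = d - 2 := by
      rw [hsd, Finset.card_erase_of_mem hl', Finset.card_erase_of_mem hl, hd]
      omega
    have hνν'' : ν'' ≠ ν := flipV_flipV_ne hll
    have hν''even : Even ν''.card := by
      rw [hν''def, even_flipV_flipV]; exact hE ν hν
    by_cases hcase : ν'' = ν'
    · -- direct move
      obtain ⟨φ', he, hch⟩ := move φ hE hll hν (by rw [← hν''def, hcase]; exact hν')
      exact ⟨φ', he, by rw [← hcase]; exact hch⟩
    · have hdpos : 0 < d - 2 := by
        rcases Nat.eq_zero_or_pos (d - 2) with h0 | h0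
        · exfalso
          rw [h0] at hcard
          exact hcase (symmDiff_eq_bot.mp (Finset.card_eq_zero.mp hcard))
        · exact h0
      have hdlt : d - 2 < d := by omega
      rcases (Bool.eq_false_or_eq_true (φ ν'')).symm with hfalse | htrue
      · -- ν'' not satisfying: move ν there, then recurse
        obtain ⟨φ1, he1, hch1⟩ := move φ hE hll hν (by rw [← hν''def]; exact hfalse)
        have hE1 : ∀ x, φ1 x = true → Even x.card := by
          intro x hx
          rcases (hch1 x).mp hx with h | h
          · rw [h]; exact hν''even
          · exact hE x h.1
        have hφ1ν'' : φ1 ν'' = true := (hch1 ν'').mpr (Or.inl rfl)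
        have hφ1ν' : φ1 ν' = false := by
          rcases Bool.eq_false_or_eq_true (φ1 ν') with h | h
          · rcases (hch1 ν').mp h with h' | h'
            · exact absurd h'.symm hcase
            · rw [hν'] at h'; exact absurd h'.1 (by simp)
          · exact h
        obtain ⟨φ2, he2, hch2⟩ := IH (d - 2) hdlt φ1 ν'' ν' hcard hE1 hν'even hφ1ν'' hφ1ν'
          (fun h => hcase h)
        refine ⟨φ2, Relation.ReflTransGen.trans he1 he2, ?_⟩
        intro x
        rw [hch2 x]
        by_cases hx : x = ν''
        · subst hx
          simp [hcase, hνν'', hfalse]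
        · rw [hch1 x]
          constructor
          · rintro (h | ⟨(h | h), h2⟩)
            · exact Or.inl h
            · exact absurd h hx
            · exact Or.inr h
          · rintro (h | h)
            · exact Or.inl h
            · exact Or.inr ⟨Or.inr h, hx⟩
      · -- ν'' satisfying: recurse first, then move ν to ν''
        obtain ⟨φ1, he1, hch1⟩ := IH (d - 2) hdlt φ ν'' ν' hcard hE hν'even htrue hν' hcase
        have hE1 : ∀ x, φ1 x = true → Even x.card := by
          intro x hx
          rcases (hch1 x).mp hx with h | h
          · rw [h]; exact hν'even
          · exact hE x h.1
        have hφ1ν : φ1 ν = true := (hch1 ν).mpr (Or.inr ⟨hν, fun h => hνν'' h.symm⟩)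
        have hφ1ν'' : φ1 ν'' = false := by
          rcases (Bool.eq_false_or_eq_true (φ1 ν'')).symm with h | h
          · exact h
          · rcases (hch1 ν'').mp h with h' | h'
            · exact absurd h' hcase
            · exact absurd rfl h'.2
        obtain ⟨φ2, he2, hch2⟩ := move φ1 hE1 hll hφ1ν (by rw [← hν''def]; exact hφ1ν'')
        refine ⟨φ2, Relation.ReflTransGen.trans he1 he2, ?_⟩
        intro x
        rw [hch2 x, ← hν''def]
        by_cases hx : x = ν''
        · subst hx
          simp [hcase, hνν'', htrue]
        · rw [hch1 x]
          constructor
          · rintro (h | ⟨(h | ⟨h1, h2⟩), h3⟩)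
            · exact absurd h hx
            · exact Or.inl h
            · exact Or.inr ⟨h1, h3⟩
          · rintro (h | h)
            · refine Or.inr ⟨Or.inl h, ?_⟩
              rw [h]; exact fun hh => hne hh.symm
            · exact Or.inr ⟨Or.inr ⟨h.1, hx⟩, h.2⟩
  · -- distance 1: parity contradiction
    exfalso
    have hsing : symmDiff ν ν' = {l} := by
      apply Finset.eq_singleton_iff_unique_mem.mpr
      refine ⟨hl, fun x hx => ?_⟩
      by_contra hxl
      exact h2 ⟨x, Finset.mem_erase.mpr ⟨hxl, hx⟩⟩
    have hνflip : ν' = flipV ν l := by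
      have hs : ∀ x, ((x ∈ ν ∧ x ∉ ν') ∨ (x ∈ ν' ∧ x ∉ ν)) ↔ x = l := by
        intro x
        rw [← Finset.mem_symmDiff, hsing, Finset.mem_singleton]
      ext x
      rw [mem_flipV]
      have := hs x
      by_cases hx : x = l
      · subst hx; tauto
      · tauto
    have h1 : Even ν'.card ↔ ¬ Even ν.card := by rw [hνflip, even_flipV]
    exact (h1.mp hν'even) (hE ν hν)


/-- satisfying valuations as a finset -/
def satF (φ : Finset (Fin (k + 1)) → Bool) : Finset (Finset (Fin (k + 1))) :=
  Finset.univ.filter (fun x => φ x = true)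

lemma mem_satF {φ : Finset (Fin (k + 1)) → Bool} {x : Finset (Fin (k + 1))} :
    x ∈ satF φ ↔ φ x = true := by simp [satF]

/-- total weight -/
def wt (φ : Finset (Fin (k + 1)) → Bool) : ℕ := ∑ x ∈ satF φ, x.card

lemma main : ∀ n : ℕ, ∀ φ : Finset (Fin (k + 1)) → Bool, wt φ < n →
    (∀ x, φ x = true → Even x.card) →
    ∃ φc, CanonicalForm k φc ∧ EquivPM k φ φc := by
  intro n
  induction n with
  | zero => intro φ h _; exact absurd h (Nat.not_lt_zero _)
  | succ n IH =>
    intro φ hw hE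
    by_cases hc : CanonicalForm k φ
    · exact ⟨φ, hc, Relation.ReflTransGen.refl⟩
    · have hbad : ∃ ν ν' : Finset (Fin (k + 1)), Even ν.card ∧ Even ν'.card ∧
          ν'.card < ν.card ∧ φ ν = true ∧ φ ν' = false := by
        by_contra hb
        exact hc ⟨hE, hb⟩
      obtain ⟨ν, ν', hEν, hEν', hlt, hφν, hφν'⟩ := hbad
      have hne : ν ≠ ν' := by rintro rfl; exact lt_irrefl _ hlt
      obtain ⟨φ1, heq, hch⟩ := swap ((symmDiff ν ν').card) φ ν ν' rfl hE hEν' hφν hφν' hne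
      have hE1 : ∀ x, φ1 x = true → Even x.card := by
        intro x hx
        rcases (hch x).mp hx with h | h
        · rw [h]; exact hEν'
        · exact hE x h.1
      have hν'sat : ν' ∉ satF φ := by rw [mem_satF, hφν']; simp
      have hsat1 : satF φ1 = insert ν' ((satF φ).erase ν) := by
        ext x
        rw [mem_satF, hch x, Finset.mem_insert, Finset.mem_erase, mem_satF]
        tauto
      have hwt : wt φ1 < wt φ := by
        have h1 : wt φ1 = ν'.card + ∑ x ∈ (satF φ).erase ν, x.card := by
          rw [wt, hsat1, Finset.sum_insert (fun hmem => hν'sat (Finset.mem_of_mem_erase hmem))]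
        have h2 : wt φ = ν.card + ∑ x ∈ (satF φ).erase ν, x.card :=
          (Finset.add_sum_erase _ _ (mem_satF.mpr hφν)).symm
        omega
      obtain ⟨φc, hcc, hee⟩ := IH φ1 (by omega) hE1
      exact ⟨φc, hcc, Relation.ReflTransGen.trans heq hee⟩

end Stmt13Aux

/-- if all satisfying valuations of `φ` have even size, then there is a
Boolean function `φ̌` in canonical form with `φ̌ ≃ φ`. -/
theorem stmt13 (k : ℕ) (hk : 1 ≤ k) (φ : Finset (Fin (k + 1)) → Bool)
    (h : ∀ ν, φ ν = true → Even ν.card) :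
    ∃ φc : Finset (Fin (k + 1)) → Bool, CanonicalForm k φc ∧ EquivPM k φc φ := by
  obtain ⟨φc, hcc, he⟩ := Stmt13Aux.main (Stmt13Aux.wt φ + 1) φ (Nat.lt_succ_self _) h
  exact ⟨φc, hcc, (@Relation.ReflTransGen.symmetric _ _ ⟨fun _ _ hab => Or.symm hab⟩).symm _ _ he⟩
end

section
/- Let k ≥ 1 and let φ, φ' be Boolean functions on V = {0,...,k}, both in canonical form, with #φ = #φ'. Then φ ≃ φ'. -/
open scoped Classical

/-- The set of satisfying valuations of a Boolean function on `V = {0,...,k}`. -/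
def satSet {k : ℕ} (φ : Finset (Fin (k + 1)) → Bool) : Finset (Finset (Fin (k + 1))) :=
  Finset.univ.filter (fun ν => φ ν = true)

-- auxiliary
noncomputable def FOf {k : ℕ} (c : ℕ) (S : Finset (Finset (Fin (k + 1)))) :
    Finset (Fin (k + 1)) → Bool :=
  fun x => decide ((Even x.card ∧ x.card < c) ∨ x ∈ S)

lemma FOf_true_iff {k : ℕ} (c : ℕ) (S : Finset (Finset (Fin (k + 1))))
    (x : Finset (Fin (k + 1))) :
    FOf c S x = true ↔ ((Even x.card ∧ x.card < c) ∨ x ∈ S) := by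
  simp [FOf]

lemma equivPM_symm {k : ℕ} {φ φ' : Finset (Fin (k + 1)) → Bool}
    (h : EquivPM k φ φ') : EquivPM k φ' φ := by
  have hsym : Symmetric (StepPM k) := by
    intro a b hab
    rcases hab with h1 | h1
    · exact Or.inr h1
    · exact Or.inl h1
  exact (@Relation.ReflTransGen.stdSymm _ _ ⟨hsym⟩).symm _ _ h

lemma swap_equiv {k : ℕ} (c : ℕ) (hc : Even c) (S : Finset (Finset (Fin (k + 1))))
    (hS : ∀ x ∈ S, x.card = c)
    (ν μ : Finset (Fin (k + 1))) (hν : ν ∈ S) (hμcard : μ.card = c) (hμ : μ ∉ S)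
    (a b : Fin (k + 1)) (hab : a ≠ b) (ha : a ∈ ν) (hb : b ∉ ν)
    (hμdef : μ = insert b (ν.erase a)) :
    EquivPM k (FOf c S) (FOf c (insert μ (S.erase ν))) := by
  set σ := ν.erase a with hσ
  have hνc : ν.card = c := hS ν hν
  have hc1 : 1 ≤ c := by
    have : 0 < ν.card := Finset.card_pos.2 ⟨a, ha⟩
    omega
  have hσcard : σ.card = c - 1 := by
    rw [hσ, Finset.card_erase_of_mem ha, hνc]
  have hσodd : ¬ Even σ.card := by
    rw [hσcard]
    rcases hc with ⟨t, ht⟩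
    intro ⟨u, hu⟩
    omega
  have hbσ : b ∉ σ := by
    intro hmem
    exact hb (Finset.mem_of_mem_erase hmem)
  have hμb : b ∈ μ := by rw [hμdef]; exact Finset.mem_insert_self _ _
  have hflipμ : flipV μ b = σ := by
    rw [flipV, if_pos hμb, hμdef, Finset.erase_insert hbσ]
  have hflipν : flipV ν a = σ := by rw [flipV, if_pos ha]
  have hσμ : σ ≠ μ := by
    intro hEq
    rw [hEq, hμcard] at hσcard
    omega
  have hσν : σ ≠ ν := by
    intro hEq
    rw [hEq, hνc] at hσcard
    omega
  have hνμ : ν ≠ μ := by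
    intro hEq; exact hμ (hEq ▸ hν)
  have hσS : σ ∉ S := by
    intro hmem
    have := hS σ hmem
    omega
  -- the intermediate function
  set φ1 : Finset (Fin (k + 1)) → Bool :=
    fun x => FOf c S x || decide (x = μ) || decide (x = σ) with hφ1
  have step1 : StepPlus k (FOf c S) φ1 := by
    refine ⟨μ, b, ?_, ?_, ?_⟩
    · simp only [FOf, decide_eq_false_iff_not]
      push_neg
      constructor
      · intro _; omega
      · exact hμ
    · rw [hflipμ]
      simp only [FOf, decide_eq_false_iff_not]
      push_neg
      constructor
      · intro hEv; exact absurd hEv hσodd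
      · exact hσS
    · intro x
      rw [hflipμ]
      simp [hφ1, or_assoc]
  have step2 : StepPlus k (FOf c (insert μ (S.erase ν))) φ1 := by
    refine ⟨ν, a, ?_, ?_, ?_⟩
    · simp only [FOf, decide_eq_false_iff_not]
      push_neg
      refine ⟨fun _ => by omega, ?_⟩
      simp [Finset.mem_insert, hνμ]
    · rw [hflipν]
      simp only [FOf, decide_eq_false_iff_not]
      push_neg
      refine ⟨fun hEv => absurd hEv hσodd, ?_⟩
      simp only [Finset.mem_insert, Finset.mem_erase]
      push_neg
      exact ⟨hσμ, fun _ => hσS⟩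
    · intro x
      rw [hflipν]
      by_cases h1 : x = ν
      · subst h1
        simp [hφ1, FOf_true_iff, hν]
      · by_cases h2 : x = σ
        · subst h2
          simp [hφ1]
        · by_cases h3 : x = μ
          · subst h3
            simp [hφ1, FOf_true_iff, h1, h2]
          · simp only [hφ1, Bool.or_eq_true, decide_eq_true_eq, FOf_true_iff,
              Finset.mem_insert, Finset.mem_erase, h1, h2, h3, or_false]
            tauto
  have hmove : StepPM k φ1 (FOf c (insert μ (S.erase ν))) := Or.inr step2
  exact Relation.ReflTransGen.head (Or.inl step1) (Relation.ReflTransGen.single hmove)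

lemma move_one {k : ℕ} (c : ℕ) (hc : Even c) :
    ∀ (m : ℕ) (S : Finset (Finset (Fin (k + 1)))), (∀ x ∈ S, x.card = c) →
    ∀ ν₀ μ : Finset (Fin (k + 1)), ν₀ ∈ S → μ ∉ S → μ.card = c → (ν₀ \ μ).card = m →
    EquivPM k (FOf c S) (FOf c (insert μ (S.erase ν₀))) := by
  intro m
  induction m using Nat.strong_induction_on with
  | _ m ih =>
  intro S hS ν₀ μ hν₀ hμ hμc hm
  have hν₀c : ν₀.card = c := hS ν₀ hν₀
  have hne : ν₀ ≠ μ := fun h => hμ (h ▸ hν₀)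
  have hmpos : 1 ≤ m := by
    rcases Nat.eq_zero_or_pos m with h0 | h
    · exfalso
      rw [h0] at hm
      have hsub : ν₀ ⊆ μ := by
        intro x hx
        by_contra hxn
        have hx2 : x ∈ ν₀ \ μ := Finset.mem_sdiff.2 ⟨hx, hxn⟩
        simp [Finset.card_eq_zero.1 hm] at hx2
      exact hne (Finset.eq_of_subset_of_card_le hsub (by omega))
    · exact h
  have hcard2 : (μ \ ν₀).card = m := by
    rw [← hm]
    exact (Finset.card_sdiff_comm (by omega)).symm
  obtain ⟨a, haa⟩ : (ν₀ \ μ).Nonempty := Finset.card_pos.1 (by omega)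
  obtain ⟨b, hbb⟩ : (μ \ ν₀).Nonempty := Finset.card_pos.1 (by omega)
  have haν : a ∈ ν₀ := (Finset.mem_sdiff.1 haa).1
  have haμ : a ∉ μ := (Finset.mem_sdiff.1 haa).2
  have hbμ : b ∈ μ := (Finset.mem_sdiff.1 hbb).1
  have hbν : b ∉ ν₀ := (Finset.mem_sdiff.1 hbb).2
  have hab : a ≠ b := fun h => hbν (h ▸ haν)
  set ρ := insert b (ν₀.erase a) with hρ
  have hbσ : b ∉ ν₀.erase a := fun h => hbν (Finset.mem_of_mem_erase h)
  have hνpos : 0 < ν₀.card := Finset.card_pos.2 ⟨a, haν⟩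
  have hρc : ρ.card = c := by
    rw [hρ, Finset.card_insert_of_notMem hbσ, Finset.card_erase_of_mem haν, hν₀c]
    omega
  have haρ : a ∉ ρ := by
    rw [hρ]
    simp [hab, Finset.mem_erase]
  have hν₀ρ : ν₀ ≠ ρ := fun h => haρ (h ▸ haν)
  by_cases hm1 : m = 1
  · -- ρ = μ, direct swap
    have h1 : μ \ ν₀ = {b} := by
      rw [Finset.eq_singleton_iff_unique_mem]
      refine ⟨hbb, fun x hx => ?_⟩
      have := Finset.card_eq_one.1 (by omega : (μ \ ν₀).card = 1)
      obtain ⟨y, hy⟩ := this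
      rw [hy, Finset.mem_singleton] at hx hbb
      rw [hx, hbb]
    have hρμ : μ = insert b (ν₀.erase a) := by
      ext x
      simp only [Finset.mem_insert, Finset.mem_erase]
      constructor
      · intro hx
        by_cases hxν : x ∈ ν₀
        · exact Or.inr ⟨fun hEq => haμ (hEq ▸ hx), hxν⟩
        · have : x ∈ μ \ ν₀ := Finset.mem_sdiff.2 ⟨hx, hxν⟩
          rw [h1, Finset.mem_singleton] at this
          exact Or.inl this
      · rintro (rfl | ⟨hxa, hxν⟩)
        · exact hbμ
        · by_contra hxμ
          have : x ∈ ν₀ \ μ := Finset.mem_sdiff.2 ⟨hxν, hxμ⟩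
          have h2 : ν₀ \ μ = {a} := by
            rw [Finset.eq_singleton_iff_unique_mem]
            refine ⟨haa, fun z hz => ?_⟩
            obtain ⟨y, hy⟩ := Finset.card_eq_one.1 (by omega : (ν₀ \ μ).card = 1)
            rw [hy, Finset.mem_singleton] at hz haa
            rw [hz, haa]
          rw [h2, Finset.mem_singleton] at this
          exact hxa this
    exact swap_equiv c hc S hS ν₀ μ hν₀ hμc hμ a b hab haν hbν hρμ
  · -- m ≥ 2
    have hρdiff : ρ \ μ = (ν₀ \ μ).erase a := by
      ext x
      simp only [hρ, Finset.mem_sdiff, Finset.mem_insert, Finset.mem_erase]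
      constructor
      · rintro ⟨(rfl | ⟨hxa, hxν⟩), hxμ⟩
        · exact absurd hbμ hxμ
        · exact ⟨hxa, hxν, hxμ⟩
      · rintro ⟨hxa, hxν, hxμ⟩
        exact ⟨Or.inr ⟨hxa, hxν⟩, hxμ⟩
    have hρdc : (ρ \ μ).card = m - 1 := by
      rw [hρdiff, Finset.card_erase_of_mem haa, hm]
    have hρμne : ρ ≠ μ := by
      intro h
      rw [h, Finset.sdiff_self] at hρdc
      simp at hρdc
      omega
    by_cases hρS : ρ ∈ S
    · have e1 := ih (m - 1) (by omega) S hS ρ μ hρS hμ hμc hρdc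
      set S₂ := insert μ (S.erase ρ) with hS₂def
      have hS₂ : ∀ x ∈ S₂, x.card = c := by
        intro x hx
        rcases Finset.mem_insert.1 hx with rfl | hx2
        · exact hμc
        · exact hS x (Finset.mem_of_mem_erase hx2)
      have hν₀S₂ : ν₀ ∈ S₂ :=
        Finset.mem_insert_of_mem (Finset.mem_erase.2 ⟨hν₀ρ, hν₀⟩)
      have hρS₂ : ρ ∉ S₂ := by
        simp [hS₂def, Finset.mem_insert, Finset.mem_erase, hρμne]
      have e2 := swap_equiv c hc S₂ hS₂ ν₀ ρ hν₀S₂ hρc hρS₂ a b hab haν hbν rfl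
      have hfam : insert ρ (S₂.erase ν₀) = insert μ (S.erase ν₀) := by
        ext x
        simp only [hS₂def, Finset.mem_insert, Finset.mem_erase]
        constructor
        · rintro (rfl | ⟨hxν, (rfl | ⟨hxρ, hxS⟩)⟩)
          · exact Or.inr ⟨fun h => hν₀ρ h.symm, hρS⟩
          · exact Or.inl rfl
          · exact Or.inr ⟨hxν, hxS⟩
        · rintro (rfl | ⟨hxν, hxS⟩)
          · exact Or.inr ⟨fun h => hne h.symm, Or.inl rfl⟩
          · by_cases hxρ : x = ρ
            · exact Or.inl hxρ
            · exact Or.inr ⟨hxν, Or.inr ⟨hxρ, hxS⟩⟩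
      exact e1.trans (hfam ▸ e2)
    · have e1 := swap_equiv c hc S hS ν₀ ρ hν₀ hρc hρS a b hab haν hbν rfl
      set S₂ := insert ρ (S.erase ν₀) with hS₂def
      have hS₂ : ∀ x ∈ S₂, x.card = c := by
        intro x hx
        rcases Finset.mem_insert.1 hx with rfl | hx2
        · exact hρc
        · exact hS x (Finset.mem_of_mem_erase hx2)
      have hρS₂ : ρ ∈ S₂ := Finset.mem_insert_self _ _
      have hμS₂ : μ ∉ S₂ := by
        simp only [hS₂def, Finset.mem_insert, Finset.mem_erase]
        push_neg
        exact ⟨fun h => hρμne h.symm, fun _ => hμ⟩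
      have e2 := ih (m - 1) (by omega) S₂ hS₂ ρ μ hρS₂ hμS₂ hμc hρdc
      have hfam : insert μ (S₂.erase ρ) = insert μ (S.erase ν₀) := by
        rw [hS₂def, Finset.erase_insert]
        intro h
        exact hρS (Finset.mem_of_mem_erase h)
      exact e1.trans (hfam ▸ e2)

lemma token_connect {k : ℕ} (c : ℕ) (hc : Even c) :
    ∀ (n : ℕ) (S S' : Finset (Finset (Fin (k + 1)))),
    (∀ x ∈ S, x.card = c) → (∀ x ∈ S', x.card = c) →
    S.card = S'.card → (S \ S').card = n →
    EquivPM k (FOf c S) (FOf c S') := by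
  intro n
  induction n with
  | zero =>
    intro S S' hS hS' hcard hd
    have hsub : S ⊆ S' := by
      intro x hx
      by_contra hxn
      have : x ∈ S \ S' := Finset.mem_sdiff.2 ⟨hx, hxn⟩
      simp [Finset.card_eq_zero.1 hd] at this
    have hSS : S = S' := Finset.eq_of_subset_of_card_le hsub (by omega)
    rw [hSS]
    exact Relation.ReflTransGen.refl
  | succ n ihn =>
    intro S S' hS hS' hcard hd
    obtain ⟨ν₀, hν₀⟩ : (S \ S').Nonempty := Finset.card_pos.1 (by omega)
    obtain ⟨μ, hμ⟩ : (S' \ S).Nonempty := by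
      apply Finset.card_pos.1
      rw [Finset.card_sdiff_comm hcard.symm, hd]
      omega
    have hν₀S : ν₀ ∈ S := (Finset.mem_sdiff.1 hν₀).1
    have hν₀S' : ν₀ ∉ S' := (Finset.mem_sdiff.1 hν₀).2
    have hμS' : μ ∈ S' := (Finset.mem_sdiff.1 hμ).1
    have hμS : μ ∉ S := (Finset.mem_sdiff.1 hμ).2
    have e1 := move_one c hc (ν₀ \ μ).card S hS ν₀ μ hν₀S hμS (hS' μ hμS') rfl
    set S₂ := insert μ (S.erase ν₀) with hS₂def
    have hS₂ : ∀ x ∈ S₂, x.card = c := by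
      intro x hx
      rcases Finset.mem_insert.1 hx with h1 | hx2
      · rw [h1]; exact hS' μ hμS'
      · exact hS x (Finset.mem_of_mem_erase hx2)
    have hμν₀ : μ ≠ ν₀ := fun h => hμS (h ▸ hν₀S)
    have hμe : μ ∉ S.erase ν₀ := fun h => hμS (Finset.mem_of_mem_erase h)
    have hS₂card : S₂.card = S'.card := by
      rw [hS₂def, Finset.card_insert_of_notMem hμe, Finset.card_erase_of_mem hν₀S]
      have : 0 < S.card := Finset.card_pos.2 ⟨ν₀, hν₀S⟩
      omega
    have hS₂diff : S₂ \ S' = (S \ S').erase ν₀ := by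
      ext x
      simp only [hS₂def, Finset.mem_sdiff, Finset.mem_insert, Finset.mem_erase]
      constructor
      · rintro ⟨(rfl | ⟨hxν, hxS⟩), hxS'⟩
        · exact absurd hμS' hxS'
        · exact ⟨hxν, hxS, hxS'⟩
      · rintro ⟨hxν, hxS, hxS'⟩
        exact ⟨Or.inr ⟨hxν, hxS⟩, hxS'⟩
    have e2 := ihn S₂ S' hS₂ hS' hS₂card (by
      rw [hS₂diff, Finset.card_erase_of_mem hν₀, hd]
      omega)
    exact e1.trans e2

noncomputable def Elow {k : ℕ} (c : ℕ) : Finset (Finset (Fin (k + 1))) :=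
  Finset.univ.filter (fun x => Even x.card ∧ x.card < c)

lemma satSet_FOf {k : ℕ} (c : ℕ) (S : Finset (Finset (Fin (k + 1)))) :
    satSet (FOf c S) = Elow c ∪ S := by
  ext x
  simp [satSet, Elow, FOf_true_iff]

lemma card_satSet_FOf {k : ℕ} (c : ℕ) (S : Finset (Finset (Fin (k + 1))))
    (hS : ∀ x ∈ S, x.card = c) :
    (satSet (FOf c S)).card = (Elow c : Finset (Finset (Fin (k + 1)))).card + S.card := by
  rw [satSet_FOf, Finset.card_union_of_disjoint]
  rw [Finset.disjoint_left]
  intro x hx hx2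
  have h1 : x.card < c := (Finset.mem_filter.1 hx).2.2
  have h2 : x.card = c := hS x hx2
  omega

lemma canonical_repr {k : ℕ} (φ : Finset (Fin (k + 1)) → Bool)
    (h : CanonicalForm k φ) (hne : (satSet φ).Nonempty) :
    ∃ (c : ℕ) (S : Finset (Finset (Fin (k + 1)))),
      Even c ∧ (∀ x ∈ S, x.card = c) ∧ S.Nonempty ∧ φ = FOf c S := by
  have hne' : ((satSet φ).image Finset.card).Nonempty := hne.image _
  set c := ((satSet φ).image Finset.card).max' hne' with hcdef
  obtain ⟨ν, hνsat, hνc⟩ := Finset.mem_image.1 (((satSet φ).image Finset.card).max'_mem hne')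
  have hνtrue : φ ν = true := (Finset.mem_filter.1 hνsat).2
  have hle : ∀ x, φ x = true → x.card ≤ c := by
    intro x hx
    apply Finset.le_max'
    exact Finset.mem_image.2 ⟨x, Finset.mem_filter.2 ⟨Finset.mem_univ _, hx⟩, rfl⟩
  have hνcard : ν.card = c := by rw [hcdef]; exact hνc
  have hceven : Even c := hνcard ▸ h.1 ν hνtrue
  refine ⟨c, (satSet φ).filter (fun x => x.card = c), hceven, ?_, ?_, ?_⟩
  · intro x hx
    exact (Finset.mem_filter.1 hx).2
  · exact ⟨ν, Finset.mem_filter.2 ⟨hνsat, hνc⟩⟩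
  · funext x
    by_cases hx : φ x = true
    · rw [hx]
      symm
      rw [FOf_true_iff]
      by_cases hxc : x.card = c
      · exact Or.inr (Finset.mem_filter.2 ⟨Finset.mem_filter.2 ⟨Finset.mem_univ _, hx⟩, hxc⟩)
      · exact Or.inl ⟨h.1 x hx, lt_of_le_of_ne (hle x hx) hxc⟩
    · have hxf : φ x = false := by
        cases hφx : φ x
        · rfl
        · exact absurd hφx hx
      rw [hxf]
      have hnot : ¬ ((Even x.card ∧ x.card < c) ∨
          x ∈ (satSet φ).filter (fun y => y.card = c)) := by
        rintro (⟨hxeven, hxlt⟩ | hmem)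
        · exact h.2 ⟨ν, x, h.1 ν hνtrue, hxeven, by omega, hνtrue, hxf⟩
        · exact hx (Finset.mem_filter.1 (Finset.mem_filter.1 hmem).1).2
      symm
      unfold FOf
      exact decide_eq_false hnot

lemma count_mono {k : ℕ} (c c' : ℕ) (hlt : c < c') (hce : Even c)
    (S S' : Finset (Finset (Fin (k + 1))))
    (hS : ∀ x ∈ S, x.card = c) (hS' : ∀ x ∈ S', x.card = c') (hS'ne : S'.Nonempty) :
    (satSet (FOf c S)).card < (satSet (FOf c' S')).card := by
  have hsub : satSet (FOf c S) ⊆ (Elow c' : Finset (Finset (Fin (k + 1)))) := by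
    intro x hx
    rw [satSet_FOf] at hx
    rcases Finset.mem_union.1 hx with hx | hx
    · have := Finset.mem_filter.1 hx
      exact Finset.mem_filter.2 ⟨Finset.mem_univ _, this.2.1, by omega⟩
    · have := hS x hx
      exact Finset.mem_filter.2 ⟨Finset.mem_univ _, this ▸ hce, by omega⟩
  calc (satSet (FOf c S)).card ≤ (Elow c' : Finset (Finset (Fin (k + 1)))).card :=
        Finset.card_le_card hsub
    _ < (Elow c').card + S'.card := by
        have : 0 < S'.card := Finset.card_pos.2 hS'ne
        omega
    _ = (satSet (FOf c' S')).card := (card_satSet_FOf c' S' hS').symm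


/-- two Boolean functions in canonical form with the same number of
satisfying valuations are `≃`-equivalent. -/
theorem stmt14 (k : ℕ) (hk : 1 ≤ k) (φ φ' : Finset (Fin (k + 1)) → Bool)
    (h : CanonicalForm k φ) (h' : CanonicalForm k φ')
    (hcard : (satSet φ).card = (satSet φ').card) :
    EquivPM k φ φ' := by
  by_cases hemp : (satSet φ).Nonempty
  · have hemp' : (satSet φ').Nonempty := by
      apply Finset.card_pos.1
      rw [← hcard]
      exact Finset.card_pos.2 hemp
    obtain ⟨c, S, hce, hS, hSne, hφeq⟩ := canonical_repr φ h hemp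
    obtain ⟨c', S', hce', hS', hSne', hφeq'⟩ := canonical_repr φ' h' hemp'
    rw [hφeq, hφeq'] at hcard ⊢
    have hcc : c = c' := by
      rcases lt_trichotomy c c' with hlt | heq | hgt
      · exact absurd hcard (ne_of_lt (count_mono c c' hlt hce S S' hS hS' hSne'))
      · exact heq
      · exact absurd hcard.symm (ne_of_lt (count_mono c' c hgt hce' S' S hS' hS hSne))
    subst hcc
    have hScard : S.card = S'.card := by
      have h1 := card_satSet_FOf c S hS
      have h2 := card_satSet_FOf c S' hS'
      omega
    exact token_connect c hce (S \ S').card S S' hS hS' hScard rfl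
  · have hfalse : ∀ x, φ x = false := by
      intro x
      cases hφx : φ x
      · rfl
      · exact absurd (Finset.mem_filter.2 ⟨Finset.mem_univ x, hφx⟩)
          (fun hmem => hemp ⟨x, hmem⟩)
    have hemp' : satSet φ' = ∅ := by
      apply Finset.card_eq_zero.1
      rw [← hcard]
      apply Finset.card_eq_zero.2
      exact Finset.not_nonempty_iff_eq_empty.1 hemp
    have hfalse' : ∀ x, φ' x = false := by
      intro x
      cases hφx : φ' x
      · rfl
      · exfalso
        have hmem : x ∈ satSet φ' := Finset.mem_filter.2 ⟨Finset.mem_univ x, hφx⟩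
        rw [hemp'] at hmem
        simp at hmem
    have heq : φ = φ' := funext (fun x => (hfalse x).trans (hfalse' x).symm)
    rw [heq]
    exact Relation.ReflTransGen.refl
end

section
/- Let k ≥ 1 and let φ be a Boolean function on V = {0,...,k} (not necessarily monotone) with eul(φ) ≠ 0 and such that min{eul(ψ) : ψ a monotone Boolean function on V} ≤ eul(φ) ≤ max{eul(ψ) : ψ a monotone Boolean function on V}. Then there exists a monotone Boolean function φ_mon on V with eul(φ_mon) = eul(φ). -/
open scoped Classical

/-- The Euler characteristic of a Boolean function: `Σ_{ν ⊨ φ} (-1)^{|ν|}`. -/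
def eul {k : ℕ} (φ : Finset (Fin (k + 1)) → Bool) : ℤ :=
  ∑ ν ∈ satSet φ, (-1 : ℤ) ^ ν.card

/-- A Boolean function is monotone if enlarging a satisfying valuation keeps it satisfying. -/
def MonotoneBF {k : ℕ} (φ : Finset (Fin (k + 1)) → Bool) : Prop :=
  ∀ ν ν' : Finset (Fin (k + 1)), ν ⊆ ν' → φ ν = true → φ ν' = true

/-- The constantly false function has Euler characteristic 0. -/
lemma eul_false (k : ℕ) : eul (fun _ : Finset (Fin (k + 1)) => false) = 0 := by
  have : satSet (fun _ : Finset (Fin (k + 1)) => false) = ∅ := by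
    simp [satSet]
  simp [eul, this]

/-- The constantly true function has Euler characteristic 0. -/
lemma eul_true (k : ℕ) : eul (fun _ : Finset (Fin (k + 1)) => true) = 0 := by
  have hs : satSet (fun _ : Finset (Fin (k + 1)) => true) = Finset.univ := by
    simp [satSet]
  have hu : (Finset.univ : Finset (Finset (Fin (k + 1)))) =
      (Finset.univ : Finset (Fin (k + 1))).powerset := by
    simp
  rw [eul, hs, hu, Finset.sum_powerset_neg_one_pow_card]
  simp [Finset.univ_nonempty.ne_empty]

/-- Key step lemma: every integer between `eul ψ` and `0` (for monotone `ψ`) is attained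
by some monotone Boolean function. Induction on the number of non-satisfying valuations. -/
lemma key (k : ℕ) : ∀ n : ℕ, ∀ ψ : Finset (Fin (k + 1)) → Bool, MonotoneBF ψ →
    (Finset.univ.filter (fun ν => ψ ν = false)).card = n →
    ∀ m : ℤ, min (eul ψ) 0 ≤ m → m ≤ max (eul ψ) 0 →
    ∃ χ : Finset (Fin (k + 1)) → Bool, MonotoneBF χ ∧ eul χ = m := by
  intro n
  induction n with
  | zero =>
    intro ψ hmono hcard m hm1 hm2
    have hall : ∀ ν, ψ ν = true := by
      intro ν
      by_contra h
      have hν : ν ∈ Finset.univ.filter (fun ν => ψ ν = false) := by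
        simp [Bool.eq_false_iff.mpr h]
      rw [Finset.card_eq_zero] at hcard
      simp [hcard] at hν
    have hψ : ψ = fun _ => true := funext hall
    rw [hψ, eul_true] at hm1 hm2
    simp at hm1 hm2
    exact ⟨ψ, hmono, by rw [hψ, eul_true]; omega⟩
  | succ n ih =>
    intro ψ hmono hcard m hm1 hm2
    by_cases hme : m = eul ψ
    · exact ⟨ψ, hmono, hme.symm⟩
    -- pick a non-satisfying valuation of maximal cardinality
    have hne : (Finset.univ.filter (fun ν => ψ ν = false)).Nonempty := by
      rw [← Finset.card_pos, hcard]; omega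
    obtain ⟨ν, hνmem, hνmax⟩ :=
      Finset.exists_max_image (Finset.univ.filter (fun ν => ψ ν = false)) Finset.card hne
    have hνf : ψ ν = false := by simpa using hνmem
    set ψ' : Finset (Fin (k + 1)) → Bool := fun μ => ψ μ || decide (μ = ν) with hψ'
    have hψ'ν : ψ' ν = true := by simp [hψ']
    -- ψ' is monotone
    have hmono' : MonotoneBF ψ' := by
      intro μ μ' hsub hμ
      simp only [hψ', Bool.or_eq_true, decide_eq_true_eq] at hμ ⊢
      rcases hμ with h | h
      · exact Or.inl (hmono μ μ' hsub h)
      · have hsub' : ν ⊆ μ' := h ▸ hsub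
        by_cases hμ' : μ' = ν
        · exact Or.inr hμ'
        · left
          by_contra hf
          have hf' : ψ μ' = false := by
            cases h : ψ μ' with
            | false => rfl
            | true => exact absurd h hf
          have hmem : μ' ∈ Finset.univ.filter (fun ν => ψ ν = false) := by
            simp [hf']
          have hle := hνmax μ' hmem
          have hlt : ν ⊂ μ' := Finset.ssubset_iff_subset_ne.mpr ⟨hsub', fun h2 => hμ' h2.symm⟩
          have := Finset.card_lt_card hlt
          omega
    -- satSet relation
    have hsat : satSet ψ' = insert ν (satSet ψ) := by
      ext μ
      simp only [satSet, Finset.mem_filter, Finset.mem_univ, true_and, Finset.mem_insert,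
        hψ', Bool.or_eq_true, decide_eq_true_eq]
      tauto
    have hνnot : ν ∉ satSet ψ := by
      simp [satSet, hνf]
    have heul' : eul ψ' = (-1 : ℤ) ^ ν.card + eul ψ := by
      rw [eul, hsat, Finset.sum_insert hνnot]; rfl
    -- card of nonsat drops by one
    have hcard' : (Finset.univ.filter (fun μ => ψ' μ = false)).card = n := by
      have : (Finset.univ.filter (fun μ => ψ' μ = false)) =
          (Finset.univ.filter (fun μ => ψ μ = false)).erase ν := by
        ext μ
        simp only [Finset.mem_filter, Finset.mem_univ, true_and, Finset.mem_erase, hψ',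
          Bool.or_eq_false_iff, decide_eq_false_iff_not]
        tauto
      rw [this, Finset.card_erase_of_mem hνmem, hcard]; omega
    -- m is still between eul ψ' and 0
    have hpm : (-1 : ℤ) ^ ν.card = 1 ∨ (-1 : ℤ) ^ ν.card = -1 := by
      rcases Nat.even_or_odd ν.card with h | h
      · exact Or.inl h.neg_one_pow
      · exact Or.inr h.neg_one_pow
    apply ih ψ' hmono' hcard' m
    · rcases hpm with h | h <;> rw [heul', h] <;> omega
    · rcases hpm with h | h <;> rw [heul', h] <;> omega

/-- if `eul(φ) ≠ 0` and `eul(φ)` lies between the minimum and the maximum of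
the Euler characteristics of monotone Boolean functions on `V`, then some monotone Boolean
function `φ_mon` on `V` has `eul(φ_mon) = eul(φ)`. -/
theorem stmt15 (k : ℕ) (hk : 1 ≤ k) (φ : Finset (Fin (k + 1)) → Bool)
    (hne : eul φ ≠ 0)
    (hlo : sInf {x : ℤ | ∃ ψ : Finset (Fin (k + 1)) → Bool, MonotoneBF ψ ∧ eul ψ = x}
        ≤ eul φ)
    (hhi : eul φ ≤
      sSup {x : ℤ | ∃ ψ : Finset (Fin (k + 1)) → Bool, MonotoneBF ψ ∧ eul ψ = x}) :
    ∃ φmon : Finset (Fin (k + 1)) → Bool, MonotoneBF φmon ∧ eul φmon = eul φ := by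
  set S := {x : ℤ | ∃ ψ : Finset (Fin (k + 1)) → Bool, MonotoneBF ψ ∧ eul ψ = x} with hS
  have h0 : (0 : ℤ) ∈ S := ⟨fun _ => false, fun _ _ _ h => by simp at h, eul_false k⟩
  have hSne : S.Nonempty := ⟨0, h0⟩
  -- boundedness
  have hbound : ∀ x ∈ S, |x| ≤ (2 ^ (k + 1) : ℤ) := by
    rintro x ⟨ψ, -, rfl⟩
    calc |eul ψ| ≤ ∑ ν ∈ satSet ψ, |(-1 : ℤ) ^ ν.card| := Finset.abs_sum_le_sum_abs _ _
    _ = (satSet ψ).card := by simp [abs_pow]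
    _ ≤ (2 ^ (k + 1) : ℤ) := by
        have h := Finset.card_le_univ (satSet ψ)
        have h2 : (satSet ψ).card ≤ 2 ^ (k + 1) := by
          simpa [Finset.card_univ] using h
        exact_mod_cast h2
  have hbb : BddBelow S := ⟨-(2 ^ (k + 1) : ℤ), fun x hx => neg_le_of_abs_le (hbound x hx)⟩
  have hba : BddAbove S := ⟨(2 ^ (k + 1) : ℤ), fun x hx => le_of_abs_le (hbound x hx)⟩
  have hInf := Int.csInf_mem hSne hbb
  have hSup := Int.csSup_mem hSne hba
  obtain ⟨ψi, hψi, hψie⟩ := hInf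
  obtain ⟨ψs, hψs, hψse⟩ := hSup
  rcases le_or_gt 0 (eul φ) with h | h
  · apply key k _ ψs hψs rfl (eul φ)
    · rw [hψse]; omega
    · rw [hψse]; exact le_max_iff.mpr (Or.inl hhi)
  · apply key k _ ψi hψi rfl (eul φ)
    · rw [hψie]; exact min_le_iff.mpr (Or.inl hlo)
    · rw [hψie]; omega
end

section
/- Let k ≥ 1 and V = {0,...,k}. The number of Boolean functions φ on V with eul(φ) = 0 equals Σ_{j=0}^{2^k} C(2^k, j)^2, where C denotes the binomial coefficient. -/
open scoped Classical

open Finset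

lemma even_flipV_card {k : ℕ} (ν : Finset (Fin (k + 1))) (l : Fin (k + 1)) :
    Even ((flipV ν l).card) ↔ ¬ Even ν.card := by
  unfold flipV
  split_ifs with h
  · rw [← Finset.card_erase_add_one h, Nat.even_add_one, not_not]
  · rw [Finset.card_insert_of_notMem h, Nat.even_add_one]

lemma flipV_flipV {k : ℕ} (ν : Finset (Fin (k + 1))) (l : Fin (k + 1)) :
    flipV (flipV ν l) l = ν := by
  by_cases h : l ∈ ν
  · simp [flipV, h, Finset.insert_erase h]
  · simp [flipV, h, Finset.erase_insert h]

lemma card_even_valuations {k : ℕ} :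
    (univ.filter (fun ν : Finset (Fin (k + 1)) => Even ν.card)).card = 2 ^ k := by
  classical
  set E := univ.filter (fun ν : Finset (Fin (k + 1)) => Even ν.card) with hE
  set O := univ.filter (fun ν : Finset (Fin (k + 1)) => ¬ Even ν.card) with hO
  have h1 : E.card = O.card := by
    refine Finset.card_bij' (fun ν _ => flipV ν 0) (fun ν _ => flipV ν 0) ?_ ?_ ?_ ?_
    · intro a ha
      simp only [hE, hO, Finset.mem_filter, Finset.mem_univ, true_and] at ha ⊢
      rw [even_flipV_card, not_not]
      exact ha
    · intro a ha
      simp only [hE, hO, Finset.mem_filter, Finset.mem_univ, true_and] at ha ⊢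
      rw [even_flipV_card]
      exact ha
    · intro a ha; exact flipV_flipV a 0
    · intro a ha; exact flipV_flipV a 0
  have h2 : E.card + O.card = 2 ^ (k + 1) := by
    rw [hE, hO, Finset.card_filter_add_card_filter_not, Finset.card_univ]
    simp [Fintype.card_finset]
  have h3 : (2:ℕ) ^ (k + 1) = 2 ^ k + 2 ^ k := by ring
  omega

lemma eul_eq {k : ℕ} (φ : Finset (Fin (k + 1)) → Bool) :
    eul φ = (((satSet φ).filter (fun ν => Even ν.card)).card : ℤ)
      - (((satSet φ).filter (fun ν => ¬ Even ν.card)).card : ℤ) := by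
  classical
  unfold eul
  rw [← Finset.sum_filter_add_sum_filter_not (satSet φ) (fun ν => Even ν.card)]
  have h1 : ∑ ν ∈ (satSet φ).filter (fun ν => Even ν.card), (-1 : ℤ) ^ ν.card
      = (((satSet φ).filter (fun ν => Even ν.card)).card : ℤ) := by
    rw [Finset.sum_congr rfl (fun ν hν => Even.neg_one_pow (Finset.mem_filter.mp hν).2)]
    simp
  have h2 : ∑ ν ∈ (satSet φ).filter (fun ν => ¬ Even ν.card), (-1 : ℤ) ^ ν.card
      = -(((satSet φ).filter (fun ν => ¬ Even ν.card)).card : ℤ) := by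
    rw [Finset.sum_congr rfl (fun ν hν =>
      Odd.neg_one_pow (Nat.not_even_iff_odd.mp (Finset.mem_filter.mp hν).2))]
    simp [mul_comm]
  rw [h1, h2]
  ring

lemma filter_union_left {α : Type*} [DecidableEq α] (A B : Finset α) (p : α → Prop)
    [DecidablePred p] (hA : ∀ ν ∈ A, p ν) (hB : ∀ ν ∈ B, ¬ p ν) :
    (A ∪ B).filter p = A := by
  ext ν
  simp only [Finset.mem_filter, Finset.mem_union]
  constructor
  · rintro ⟨h | h, he⟩
    · exact h
    · exact absurd he (hB ν h)
  · intro h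
    exact ⟨Or.inl h, hA ν h⟩

lemma filter_union_right {α : Type*} [DecidableEq α] (A B : Finset α) (p : α → Prop)
    [DecidablePred p] (hA : ∀ ν ∈ A, p ν) (hB : ∀ ν ∈ B, ¬ p ν) :
    (A ∪ B).filter (fun ν => ¬ p ν) = B := by
  ext ν
  simp only [Finset.mem_filter, Finset.mem_union]
  constructor
  · rintro ⟨h | h, he⟩
    · exact absurd (hA ν h) he
    · exact h
  · intro h
    exact ⟨Or.inr h, hB ν h⟩

/-- the number of Boolean functions `φ` on `V = {0,...,k}` with `eul(φ) = 0`
equals `Σ_{j=0}^{2^k} C(2^k, j)^2`. -/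
theorem stmt16 (k : ℕ) (hk : 1 ≤ k) :
    (Finset.univ.filter
        (fun φ : Finset (Fin (k + 1)) → Bool => eul φ = 0)).card
      = ∑ j ∈ Finset.range (2 ^ k + 1), (Nat.choose (2 ^ k) j) ^ 2 := by
  classical
  set E := univ.filter (fun ν : Finset (Fin (k + 1)) => Even ν.card) with hE
  set O := univ.filter (fun ν : Finset (Fin (k + 1)) => ¬ Even ν.card) with hO
  have hEcard : E.card = 2 ^ k := card_even_valuations
  have hOcard : O.card = 2 ^ k := by
    have h2 : E.card + O.card = 2 ^ (k + 1) := by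
      rw [hE, hO, Finset.card_filter_add_card_filter_not, Finset.card_univ]
      simp [Fintype.card_finset]
    have h3 : (2:ℕ) ^ (k + 1) = 2 ^ k + 2 ^ k := by ring
    omega
  have hmemE : ∀ ν : Finset (Fin (k + 1)), ν ∈ E ↔ Even ν.card := by
    intro ν; simp [hE]
  have hmemO : ∀ ν : Finset (Fin (k + 1)), ν ∈ O ↔ ¬ Even ν.card := by
    intro ν; simp [hO, Nat.not_even_iff_odd]
  have heul : ∀ φ : Finset (Fin (k + 1)) → Bool, eul φ = 0 ↔
      ((satSet φ).filter (fun ν => Even ν.card)).card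
        = ((satSet φ).filter (fun ν => ¬ Even ν.card)).card := by
    intro φ
    rw [eul_eq, sub_eq_zero]
    exact_mod_cast Iff.rfl
  have hsat : ∀ p : Finset (Finset (Fin (k + 1))) × Finset (Finset (Fin (k + 1))),
      satSet (fun ν => decide (ν ∈ p.1 ∪ p.2)) = p.1 ∪ p.2 := by
    intro p; ext ν; simp [satSet]
  have key : (Finset.univ.filter
        (fun φ : Finset (Fin (k + 1)) → Bool => eul φ = 0)).card
      = ((E.powerset ×ˢ O.powerset).filter (fun p => p.1.card = p.2.card)).card := by
    refine Finset.card_bij'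
      (fun φ _ => ((satSet φ).filter (fun ν => Even ν.card),
                   (satSet φ).filter (fun ν => ¬ Even ν.card)))
      (fun p _ => fun ν => decide (ν ∈ p.1 ∪ p.2)) ?_ ?_ ?_ ?_
    · intro φ hφ
      simp only [Finset.mem_filter, Finset.mem_univ, true_and] at hφ
      simp only [Finset.mem_filter, Finset.mem_product, Finset.mem_powerset]
      refine ⟨⟨?_, ?_⟩, (heul φ).mp hφ⟩
      · intro ν hν
        exact (hmemE ν).mpr (Finset.mem_filter.mp hν).2
      · intro ν hν
        exact (hmemO ν).mpr (Finset.mem_filter.mp hν).2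
    · intro p hp
      simp only [Finset.mem_filter, Finset.mem_product, Finset.mem_powerset] at hp
      obtain ⟨⟨h1, h2⟩, hc⟩ := hp
      simp only [Finset.mem_filter, Finset.mem_univ, true_and]
      rw [heul, hsat p,
        filter_union_left p.1 p.2 _ (fun ν hν => (hmemE ν).mp (h1 hν))
          (fun ν hν => (hmemO ν).mp (h2 hν)),
        filter_union_right p.1 p.2 _ (fun ν hν => (hmemE ν).mp (h1 hν))
          (fun ν hν => (hmemO ν).mp (h2 hν))]
      exact hc
    · intro φ hφ
      funext ν
      have : (satSet φ).filter (fun ν => Even ν.card) ∪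
          (satSet φ).filter (fun ν => ¬ Even ν.card) = satSet φ := by
        rw [Finset.filter_union_filter_not_eq]
      simp only [this]
      by_cases h : φ ν = true
      · simp [satSet, h]
      · simp only [Bool.not_eq_true] at h
        simp [satSet, h]
    · intro p hp
      simp only [Finset.mem_filter, Finset.mem_product, Finset.mem_powerset] at hp
      obtain ⟨⟨h1, h2⟩, hc⟩ := hp
      have e1 := filter_union_left p.1 p.2 (fun ν => Even ν.card)
        (fun ν hν => (hmemE ν).mp (h1 hν)) (fun ν hν => (hmemO ν).mp (h2 hν))
      have e2 := filter_union_right p.1 p.2 (fun ν => Even ν.card)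
        (fun ν hν => (hmemE ν).mp (h1 hν)) (fun ν hν => (hmemO ν).mp (h2 hν))
      simp only [hsat p, e1, e2]
  rw [key]
  have hbi : (E.powerset ×ˢ O.powerset).filter (fun p => p.1.card = p.2.card)
      = (Finset.range (2 ^ k + 1)).biUnion
          (fun j => Finset.powersetCard j E ×ˢ Finset.powersetCard j O) := by
    ext p
    simp only [Finset.mem_filter, Finset.mem_product, Finset.mem_powerset,
      Finset.mem_biUnion, Finset.mem_range, Finset.mem_powersetCard]
    constructor
    · rintro ⟨⟨h1, h2⟩, hc⟩
      refine ⟨p.1.card, ?_, ⟨h1, rfl⟩, ⟨h2, hc.symm⟩⟩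
      have := Finset.card_le_card h1
      omega
    · rintro ⟨j, _, ⟨h1, hc1⟩, ⟨h2, hc2⟩⟩
      exact ⟨⟨h1, h2⟩, by omega⟩
  rw [hbi, Finset.card_biUnion]
  · apply Finset.sum_congr rfl
    intro j hj
    rw [Finset.card_product, Finset.card_powersetCard, Finset.card_powersetCard,
      hEcard, hOcard, sq]
  · intro i hi j hj hij
    simp only [Finset.disjoint_left]
    intro p hp hq
    simp only [Finset.mem_product, Finset.mem_powersetCard] at hp hq
    exact hij (hp.1.2.symm.trans hq.1.2)
end
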